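/- Let q be an odd prime power with q ≡ 1 (mod 4) and let A ∈ GL(2,F_q). If the permutation of ℙ¹(F_q) induced by A maps some 3-element subset of ℙ¹(F_q) onto itself, then det A is a square in F_q. (Equivalently: every element of PGL(2,F_q) not lying in PSL(2,F_q) is a derangement for the action on 3-subsets.) -/

import Mathlib

open scoped Pointwise MatrixGroups

noncomputable section

/-- The projective line over `K`. -/
abbrev Proj (K : Type*) [Field K] := Projectivization K (Fin 2 → K)

variable {K : Type*} [Field K]

lemma GLmulVecLin_injective (g : GL (Fin 2) K) :
    Function.Injective ((g : Matrix (Fin 2) (Fin 2) K).mulVecLin) := by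
  intro u v huv
  have h := congrArg ((((g⁻¹ : GL (Fin 2) K) : Matrix (Fin 2) (Fin 2) K)).mulVecLin) huv
  simp only [Matrix.mulVecLin_apply, Matrix.mulVec_mulVec] at h
  rw [show ((g⁻¹ : GL (Fin 2) K) : Matrix (Fin 2) (Fin 2) K) * (g : Matrix (Fin 2) (Fin 2) K) = 1
    from g.inv_mul, Matrix.one_mulVec, Matrix.one_mulVec] at h
  exact h

lemma GLmulVec_ne_zero (g : GL (Fin 2) K) {v : Fin 2 → K} (hv : v ≠ 0) :
    (g : Matrix (Fin 2) (Fin 2) K).mulVec v ≠ 0 := by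
  intro h
  apply hv
  have : ((g : Matrix (Fin 2) (Fin 2) K)).mulVecLin v =
      ((g : Matrix (Fin 2) (Fin 2) K)).mulVecLin 0 := by
    simpa [Matrix.mulVecLin_apply] using h
  simpa using GLmulVecLin_injective g this

/-- The action of `GL(2,K)` on the projective line by matrix-vector multiplication on
representatives. -/
instance GLProjAction : MulAction (GL (Fin 2) K) (Proj K) where
  smul g x := Projectivization.map ((g : Matrix (Fin 2) (Fin 2) K).mulVecLin)
    (GLmulVecLin_injective g) x
  one_smul x := by
    induction x using Projectivization.ind with
    | h v hv =>
      show Projectivization.map _ _ _ = _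
      simp [Projectivization.map_mk]
  mul_smul g h x := by
    induction x using Projectivization.ind with
    | h v hv =>
      show Projectivization.map _ _ _ =
        Projectivization.map _ _ (Projectivization.map _ _ _)
      simp [Projectivization.map_mk, Matrix.mulVecLin_apply, Matrix.mulVec_mulVec,
        Units.val_mul]

lemma GL_smul_mk (g : GL (Fin 2) K) (v : Fin 2 → K) (hv : v ≠ 0) :
    g • Projectivization.mk K v hv =
      Projectivization.mk K ((g : Matrix (Fin 2) (Fin 2) K).mulVec v)
        (GLmulVec_ne_zero g hv) := by
  show Projectivization.map _ _ _ = _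
  simp [Projectivization.map_mk, Matrix.mulVecLin_apply]

/-- The action of `SL(2,K)` on the projective line. -/
instance SLProjAction : MulAction (Matrix.SpecialLinearGroup (Fin 2) K) (Proj K) :=
  MulAction.compHom _ (Matrix.SpecialLinearGroup.toGL)

end

noncomputable section
variable {K : Type*} [Field K]

lemma center_smul_eq (c : GL (Fin 2) K) (hc : c ∈ Subgroup.center (GL (Fin 2) K))
    (x : Proj K) : c • x = x := by
  have hcomm : ∀ t : Matrix.TransvectionStruct (Fin 2) K,
      Commute t.toMatrix (c : Matrix (Fin 2) (Fin 2) K) := by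
    intro t
    let u : GL (Fin 2) K := ⟨t.toMatrix, t.inv.toMatrix, t.mul_inv, t.inv_mul⟩
    have h := Subgroup.mem_center_iff.mp hc u
    have := congrArg Units.val h
    simpa [u, Commute, SemiconjBy] using this
  obtain ⟨r, hr⟩ := Matrix.mem_range_scalar_of_commute_transvectionStruct hcomm
  have hr0 : r ≠ 0 := by
    intro h0
    have hne : (![1, 0] : Fin 2 → K) ≠ 0 := by
      intro h
      have := congrFun h 0
      simp at this
    have := GLmulVec_ne_zero c hne
    rw [← hr, h0] at this
    rw [show (0 : K) = (0 : K) from rfl] at this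
    apply this
    funext i
    simp [Matrix.mulVec_diagonal]
  induction x using Projectivization.ind with
  | h v hv =>
    rw [GL_smul_mk]
    rw [Projectivization.mk_eq_mk_iff]
    refine ⟨Units.mk0 r hr0, ?_⟩
    rw [← hr]
    funext i
    simp [Matrix.mulVec_diagonal]

end

noncomputable section

/-- The projective general linear group `PGL(2,K) = GL(2,K)/Z(GL(2,K))`. -/
abbrev PGL2 (K : Type*) [Field K] : Type _ :=
  GL (Fin 2) K ⧸ Subgroup.center (GL (Fin 2) K)

variable {K : Type*} [Field K]

/-- The action of `GL(2,K)` on the projective line descends to `PGL(2,K)`. -/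
instance PGLProjSMul : SMul (PGL2 K) (Proj K) :=
  ⟨fun g x => Quotient.liftOn' g (fun a => a • x) (by
    intro a b hab
    rw [QuotientGroup.leftRel_apply] at hab
    show a • x = b • x
    have hb : b = a * (a⁻¹ * b) := by group
    rw [hb, mul_smul, center_smul_eq _ hab])⟩

instance PGLProjAction : MulAction (PGL2 K) (Proj K) where
  one_smul x := center_smul_eq 1 (Subgroup.one_mem _) x
  mul_smul g h x := by
    induction g using Quotient.inductionOn' with
    | h a =>
      induction h using Quotient.inductionOn' with
      | h b => exact mul_smul a b x

lemma PGL2_smul_mk' (a : GL (Fin 2) K) (x : Proj K) :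
    (QuotientGroup.mk a : PGL2 K) • x = a • x := rfl

/-- The natural homomorphism `SL(2,K) → PGL(2,K)`. -/
def SLtoPGL2 (K : Type*) [Field K] : Matrix.SpecialLinearGroup (Fin 2) K →* PGL2 K :=
  (QuotientGroup.mk' (Subgroup.center (GL (Fin 2) K))).comp Matrix.SpecialLinearGroup.toGL

/-- `PSL(2,K)`, realized as the image of `SL(2,K)` in `PGL(2,K)`. -/
def PSL2 (K : Type*) [Field K] : Subgroup (PGL2 K) := (SLtoPGL2 K).range

/-- A subset `F` of a group `G` acting on the projective line over `K` is *intersecting for the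
action on `k`-element subsets* if any two of its elements agree on some `k`-element subset of
the projective line. -/
def IntersectingOnSubsets (G : Type*) [Group G] (K : Type*) [Field K]
    [MulAction G (Proj K)] (k : ℕ) (F : Set G) : Prop :=
  ∀ g ∈ F, ∀ h ∈ F, ∃ S : Set (Proj K), S.ncard = k ∧ g • S = h • S

end

section Helpers
variable {K : Type*} [Field K]

lemma exists_unit_mulVec_rep (A : GL (Fin 2) K) {x y : Proj K} (h : A • x = y) :
    ∃ c : Kˣ, (A : Matrix (Fin 2) (Fin 2) K).mulVec x.rep = (c : K) • y.rep := by
  have hx : A • Projectivization.mk K x.rep x.rep_nonzero = y := by rw [x.mk_rep]; exact h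
  rw [GL_smul_mk] at hx
  rw [← y.mk_rep, Projectivization.mk_eq_mk_iff] at hx
  obtain ⟨a, ha⟩ := hx
  exact ⟨a, by rw [← ha, Units.smul_def]⟩

lemma mk_eq_mk_of_det2 {v w : Fin 2 → K} (hv : v ≠ 0) (hw : w ≠ 0)
    (hd : v 0 * w 1 - v 1 * w 0 = 0) :
    Projectivization.mk K v hv = Projectivization.mk K w hw := by
  rw [Projectivization.mk_eq_mk_iff]
  have hv' : v 0 ≠ 0 ∨ v 1 ≠ 0 := by
    by_contra hc
    push_neg at hc
    exact hv (by funext i; fin_cases i <;> simp [hc.1, hc.2])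
  rcases hv' with h0 | h1
  · have hw0 : w 0 ≠ 0 := by
      intro h
      refine hw (funext fun i => ?_)
      have hw1 : w 1 = 0 := by
        rw [h] at hd
        have h' : v 0 * w 1 = 0 := by linear_combination hd
        rcases mul_eq_zero.mp h' with h'' | h''
        · exact absurd h'' h0
        · exact h''
      fin_cases i <;> simp [h, hw1]
    refine ⟨Units.mk0 (v 0 / w 0) (div_ne_zero h0 hw0), funext fun i => ?_⟩
    fin_cases i <;> simp only [Units.smul_def, Units.val_mk0, Pi.smul_apply, smul_eq_mul, Fin.zero_eta, Fin.mk_one]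
    · field_simp
    · field_simp
      linear_combination hd
  · have hw1 : w 1 ≠ 0 := by
      intro h
      refine hw (funext fun i => ?_)
      have hw0 : w 0 = 0 := by
        rw [h] at hd
        have h' : v 1 * w 0 = 0 := by linear_combination -hd
        rcases mul_eq_zero.mp h' with h'' | h''
        · exact absurd h'' h1
        · exact h''
      fin_cases i <;> simp [h, hw0]
    refine ⟨Units.mk0 (v 1 / w 1) (div_ne_zero h1 hw1), funext fun i => ?_⟩
    fin_cases i <;> simp only [Units.smul_def, Units.val_mk0, Pi.smul_apply, smul_eq_mul, Fin.zero_eta, Fin.mk_one]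
    · field_simp
      linear_combination -hd
    · field_simp

lemma det2_ne_zero_of_ne {x y : Proj K} (h : x ≠ y) :
    x.rep 0 * y.rep 1 - x.rep 1 * y.rep 0 ≠ 0 := fun hd =>
  h (by
    rw [← x.mk_rep, ← y.mk_rep]
    exact mk_eq_mk_of_det2 x.rep_nonzero y.rep_nonzero hd)

lemma coord_unique' {v w : Fin 2 → K} (hd : v 0 * w 1 - v 1 * w 0 ≠ 0) {a b a' b' : K}
    (h0 : a * v 0 + b * w 0 = a' * v 0 + b' * w 0)
    (h1 : a * v 1 + b * w 1 = a' * v 1 + b' * w 1) : a = a' ∧ b = b' := by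
  constructor
  · have hz : (a - a') * (v 0 * w 1 - v 1 * w 0) = 0 := by
      linear_combination w 1 * h0 - w 0 * h1
    rcases mul_eq_zero.mp hz with h' | h'
    · exact sub_eq_zero.mp h'
    · exact absurd h' hd
  · have hz : (b - b') * (v 0 * w 1 - v 1 * w 0) = 0 := by
      linear_combination v 0 * h1 - v 1 * h0
    rcases mul_eq_zero.mp hz with h' | h'
    · exact sub_eq_zero.mp h'
    · exact absurd h' hd

lemma det_of_basis {A : Matrix (Fin 2) (Fin 2) K} {v w : Fin 2 → K} {p q r s : K}
    (hd : v 0 * w 1 - v 1 * w 0 ≠ 0)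
    (h1 : A.mulVec v = p • v + q • w) (h2 : A.mulVec w = r • v + s • w) :
    A.det = p * s - q * r := by
  have e10 := congrFun h1 0
  have e11 := congrFun h1 1
  have e20 := congrFun h2 0
  have e21 := congrFun h2 1
  simp only [Matrix.mulVec, dotProduct, Fin.sum_univ_two, Pi.add_apply, Pi.smul_apply,
    smul_eq_mul] at e10 e11 e20 e21
  have hAM : A * !![v 0, w 0; v 1, w 1] = !![v 0, w 0; v 1, w 1] * !![p, r; q, s] := by
    ext i j
    fin_cases i <;> fin_cases j <;>
      simp [Matrix.mul_apply, Fin.sum_univ_two]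
    · linear_combination e10
    · linear_combination e20
    · linear_combination e11
    · linear_combination e21
  have hdet := congrArg Matrix.det hAM
  rw [Matrix.det_mul, Matrix.det_mul] at hdet
  have hM : (!![v 0, w 0; v 1, w 1] : Matrix (Fin 2) (Fin 2) K).det = v 0 * w 1 - v 1 * w 0 := by
    rw [Matrix.det_fin_two_of]; ring
  have hB : (!![p, r; q, s] : Matrix (Fin 2) (Fin 2) K).det = p * s - q * r := by
    rw [Matrix.det_fin_two_of]; ring
  rw [hM, hB] at hdet
  refine mul_right_cancel₀ hd ?_
  linear_combination hdet

lemma decompose {v w : Fin 2 → K} (z : Fin 2 → K) (hd : v 0 * w 1 - v 1 * w 0 ≠ 0) :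
    z = ((z 0 * w 1 - z 1 * w 0) / (v 0 * w 1 - v 1 * w 0)) • v
      + ((v 0 * z 1 - v 1 * z 0) / (v 0 * w 1 - v 1 * w 0)) • w := by
  funext i
  fin_cases i <;>
    (simp only [Pi.add_apply, Pi.smul_apply, smul_eq_mul, Fin.zero_eta, Fin.mk_one];
      rw [div_mul_eq_mul_div, div_mul_eq_mul_div, ← add_div, eq_div_iff hd]; ring)

lemma mulVec_combo (A : GL (Fin 2) K) {v w z cv cw : Fin 2 → K} {a b : K}
    (hz : z = a • v + b • w)
    (hv : (A : Matrix (Fin 2) (Fin 2) K).mulVec v = cv)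
    (hw : (A : Matrix (Fin 2) (Fin 2) K).mulVec w = cw) :
    (A : Matrix (Fin 2) (Fin 2) K).mulVec z = a • cv + b • cw := by
  rw [hz, Matrix.mulVec_add, Matrix.mulVec_smul, Matrix.mulVec_smul, hv, hw]

/-- All three points fixed: `A` is scalar-like, determinant is a square. -/
lemma isSquare_det_of_fix3 (A : GL (Fin 2) K) {x y z : Proj K}
    (hxy : x ≠ y) (hxz : x ≠ z) (hyz : y ≠ z)
    (hx : A • x = x) (hy : A • y = y) (hz : A • z = z) :
    IsSquare ((A : Matrix (Fin 2) (Fin 2) K).det) := by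
  obtain ⟨c, hc⟩ := exists_unit_mulVec_rep A hx
  obtain ⟨e, he⟩ := exists_unit_mulVec_rep A hy
  obtain ⟨f, hf⟩ := exists_unit_mulVec_rep A hz
  have hd : x.rep 0 * y.rep 1 - x.rep 1 * y.rep 0 ≠ 0 := det2_ne_zero_of_ne hxy
  set a := (z.rep 0 * y.rep 1 - z.rep 1 * y.rep 0) / (x.rep 0 * y.rep 1 - x.rep 1 * y.rep 0)
    with ha_def
  set b := (x.rep 0 * z.rep 1 - x.rep 1 * z.rep 0) / (x.rep 0 * y.rep 1 - x.rep 1 * y.rep 0)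
    with hb_def
  have ha : a ≠ 0 := div_ne_zero (det2_ne_zero_of_ne hyz.symm) hd
  have hb : b ≠ 0 := div_ne_zero (det2_ne_zero_of_ne hxz) hd
  have hzab : z.rep = a • x.rep + b • y.rep := decompose z.rep hd
  have hveq : a • ((c : K) • x.rep) + b • ((e : K) • y.rep)
      = (f : K) • (a • x.rep + b • y.rep) := by
    rw [← hzab, ← hf]
    exact (mulVec_combo A hzab hc he).symm
  have e0 := congrFun hveq 0
  have e1 := congrFun hveq 1
  simp only [Pi.add_apply, Pi.smul_apply, smul_eq_mul] at e0 e1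
  obtain ⟨h1, h2⟩ := coord_unique' hd
    (a := a * (c : K)) (b := b * (e : K)) (a' := (f : K) * a) (b' := (f : K) * b)
    (by linear_combination e0) (by linear_combination e1)
  have hcf : (c : K) = (f : K) := by
    have := mul_left_cancel₀ ha (h1.trans (mul_comm _ _))
    exact this
  have hef : (e : K) = (f : K) := by
    have := mul_left_cancel₀ hb (h2.trans (mul_comm _ _))
    exact this
  have hdet : (A : Matrix (Fin 2) (Fin 2) K).det = (c : K) * (e : K) := by
    have hx1 : (A : Matrix (Fin 2) (Fin 2) K).mulVec x.rep
        = (c : K) • x.rep + (0 : K) • y.rep := by rw [hc]; simp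
    have hy1 : (A : Matrix (Fin 2) (Fin 2) K).mulVec y.rep
        = (0 : K) • x.rep + (e : K) • y.rep := by rw [he]; simp
    rw [det_of_basis hd hx1 hy1]; ring
  exact ⟨(c : K), by rw [hdet, hcf, hef]⟩

/-- One fixed point, two swapped. -/
lemma isSquare_det_of_swap (A : GL (Fin 2) K) (hsq : IsSquare (-1 : K)) {x y z : Proj K}
    (hxy : x ≠ y) (hxz : x ≠ z) (hyz : y ≠ z)
    (hx : A • x = x) (hy : A • y = z) (hz : A • z = y) :
    IsSquare ((A : Matrix (Fin 2) (Fin 2) K).det) := by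
  obtain ⟨l, hl⟩ := exists_unit_mulVec_rep A hx
  obtain ⟨al, hal⟩ := exists_unit_mulVec_rep A hy
  obtain ⟨bt, hbt⟩ := exists_unit_mulVec_rep A hz
  have hd : y.rep 0 * z.rep 1 - y.rep 1 * z.rep 0 ≠ 0 := det2_ne_zero_of_ne hyz
  set a := (x.rep 0 * z.rep 1 - x.rep 1 * z.rep 0) / (y.rep 0 * z.rep 1 - y.rep 1 * z.rep 0)
    with ha_def
  set b := (y.rep 0 * x.rep 1 - y.rep 1 * x.rep 0) / (y.rep 0 * z.rep 1 - y.rep 1 * z.rep 0)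
    with hb_def
  have ha : a ≠ 0 := div_ne_zero (det2_ne_zero_of_ne hxz) hd
  have hb : b ≠ 0 := div_ne_zero (det2_ne_zero_of_ne hxy.symm) hd
  have hxab : x.rep = a • y.rep + b • z.rep := decompose x.rep hd
  have hveq : a • ((al : K) • z.rep) + b • ((bt : K) • y.rep)
      = (l : K) • (a • y.rep + b • z.rep) := by
    rw [← hxab, ← hl]
    exact (mulVec_combo A hxab hal hbt).symm
  have e0 := congrFun hveq 0
  have e1 := congrFun hveq 1
  simp only [Pi.add_apply, Pi.smul_apply, smul_eq_mul] at e0 e1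
  obtain ⟨h1, h2⟩ := coord_unique' hd
    (a := b * (bt : K)) (b := a * (al : K)) (a' := (l : K) * a) (b' := (l : K) * b)
    (by linear_combination e0) (by linear_combination e1)
  -- b*bt = l*a, a*al = l*b → al*bt = l²
  have key : (al : K) * (bt : K) = (l : K) * (l : K) := by
    have hmul : (a * (al : K)) * (b * (bt : K)) = ((l : K) * b) * ((l : K) * a) := by
      rw [h2, h1]
    have h3 : a * (b * ((al : K) * (bt : K))) = a * (b * ((l : K) * (l : K))) := by
      linear_combination hmul
    exact mul_left_cancel₀ hb (mul_left_cancel₀ ha h3)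
  have hdet : (A : Matrix (Fin 2) (Fin 2) K).det = -((al : K) * (bt : K)) := by
    have hy1 : (A : Matrix (Fin 2) (Fin 2) K).mulVec y.rep
        = (0 : K) • y.rep + (al : K) • z.rep := by rw [hal]; simp
    have hz1 : (A : Matrix (Fin 2) (Fin 2) K).mulVec z.rep
        = (bt : K) • y.rep + (0 : K) • z.rep := by rw [hbt]; simp
    rw [det_of_basis hd hy1 hz1]; ring
  obtain ⟨i, hi⟩ := hsq
  exact ⟨i * (l : K), by rw [hdet, key]; linear_combination (l : K) * (l : K) * hi⟩

/-- Three-cycle. -/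
lemma isSquare_det_of_cycle (A : GL (Fin 2) K) {x y z : Proj K}
    (hxy : x ≠ y) (hxz : x ≠ z) (hyz : y ≠ z)
    (hx : A • x = y) (hy : A • y = z) (hz : A • z = x) :
    IsSquare ((A : Matrix (Fin 2) (Fin 2) K).det) := by
  obtain ⟨al, hal⟩ := exists_unit_mulVec_rep A hx
  obtain ⟨bt, hbt⟩ := exists_unit_mulVec_rep A hy
  obtain ⟨gm, hgm⟩ := exists_unit_mulVec_rep A hz
  have hd : x.rep 0 * y.rep 1 - x.rep 1 * y.rep 0 ≠ 0 := det2_ne_zero_of_ne hxy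
  set a := (z.rep 0 * y.rep 1 - z.rep 1 * y.rep 0) / (x.rep 0 * y.rep 1 - x.rep 1 * y.rep 0)
    with ha_def
  set b := (x.rep 0 * z.rep 1 - x.rep 1 * z.rep 0) / (x.rep 0 * y.rep 1 - x.rep 1 * y.rep 0)
    with hb_def
  have ha : a ≠ 0 := div_ne_zero (det2_ne_zero_of_ne hyz.symm) hd
  have hb : b ≠ 0 := div_ne_zero (det2_ne_zero_of_ne hxz) hd
  have hzab : z.rep = a • x.rep + b • y.rep := decompose z.rep hd
  have hveq : a • ((al : K) • y.rep) + b • ((bt : K) • (a • x.rep + b • y.rep))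
      = (gm : K) • x.rep := by
    rw [← hzab, ← hgm]
    exact (mulVec_combo A hzab hal (hbt.trans (by rw [hzab]))).symm
  have e0 := congrFun hveq 0
  have e1 := congrFun hveq 1
  simp only [Pi.add_apply, Pi.smul_apply, smul_eq_mul] at e0 e1
  obtain ⟨h1, h2⟩ := coord_unique' hd
    (a := b * (bt : K) * a) (b := a * (al : K) + b * ((bt : K) * b)) (a' := (gm : K)) (b' := 0)
    (by linear_combination e0) (by linear_combination e1)
  have hy1 : (A : Matrix (Fin 2) (Fin 2) K).mulVec y.rep
      = ((bt : K) * a) • x.rep + ((bt : K) * b) • y.rep := by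
    rw [hbt, hzab, smul_add, smul_smul, smul_smul]
  have hdet : (A : Matrix (Fin 2) (Fin 2) K).det = -((al : K) * ((bt : K) * a)) := by
    have hx1 : (A : Matrix (Fin 2) (Fin 2) K).mulVec x.rep
        = (0 : K) • x.rep + (al : K) • y.rep := by rw [hal]; simp
    rw [det_of_basis hd hx1 hy1]; ring
  refine ⟨b * (bt : K), ?_⟩
  rw [hdet]
  linear_combination -(bt : K) * h2

end Helpers

open scoped Pointwise in
set_option synthInstance.maxHeartbeats 1000000 in
/-- Let `q` be an odd prime power with `q ≡ 1 (mod 4)`. If the permutation of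
the projective line induced by `A ∈ GL(2, F_q)` maps some 3-element subset onto itself, then
`det A` is a square in `F_q`. -/
theorem det_isSquare_of_fixes_three_subset (p m : ℕ) [Fact p.Prime] (hp : Odd p) (hm : 1 ≤ m)
    (hq : p ^ m % 4 = 1) (A : GL (Fin 2) (GaloisField p m))
    (S : Set (Proj (GaloisField p m))) (hS : S.ncard = 3) (hfix : A • S = S) :
    IsSquare ((A : Matrix (Fin 2) (Fin 2) (GaloisField p m)).det) := by
  classical
  have hft : Fintype (GaloisField p m) := Fintype.ofFinite _
  have hcard : Fintype.card (GaloisField p m) = p ^ m := by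
    rw [← Nat.card_eq_fintype_card, GaloisField.card p m (by omega)]
  have hsq : IsSquare (-1 : GaloisField p m) := by
    rw [FiniteField.isSquare_neg_one_iff, hcard, hq]; omega
  obtain ⟨x, y, z, hxy, hxz, hyz, rfl⟩ := Set.ncard_eq_three.mp hS
  have hmem : ∀ u ∈ ({x, y, z} : Set (Proj (GaloisField p m))),
      A • u ∈ ({x, y, z} : Set (Proj (GaloisField p m))) := by
    intro u hu
    rw [← hfix]
    exact Set.smul_mem_smul_set hu
  have hinj : Function.Injective fun u : Proj (GaloisField p m) => A • u :=
    MulAction.injective A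
  have hx' := hmem x (by simp)
  have hy' := hmem y (by simp)
  have hz' := hmem z (by simp)
  simp only [Set.mem_insert_iff, Set.mem_singleton_iff] at hx' hy' hz'
  rcases hx' with hx1 | hx1 | hx1
  · rcases hy' with hy1 | hy1 | hy1
    · exact absurd (hinj (hy1.trans hx1.symm)) hxy.symm
    · rcases hz' with hz1 | hz1 | hz1
      · exact absurd (hinj (hz1.trans hx1.symm)) (Ne.symm hxz)
      · exact absurd (hinj (hz1.trans hy1.symm)) (Ne.symm hyz)
      · exact isSquare_det_of_fix3 A hxy hxz hyz hx1 hy1 hz1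
    · rcases hz' with hz1 | hz1 | hz1
      · exact absurd (hinj (hz1.trans hx1.symm)) (Ne.symm hxz)
      · exact isSquare_det_of_swap A hsq hxy hxz hyz hx1 hy1 hz1
      · exact absurd (hinj (hz1.trans hy1.symm)) (Ne.symm hyz)
  · rcases hy' with hy1 | hy1 | hy1
    · rcases hz' with hz1 | hz1 | hz1
      · exact absurd (hinj (hz1.trans hy1.symm)) (Ne.symm hyz)
      · exact absurd (hinj (hz1.trans hx1.symm)) (Ne.symm hxz)
      · exact isSquare_det_of_swap A hsq hxz.symm hyz.symm hxy hz1 hx1 hy1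
    · exact absurd (hinj (hx1.trans hy1.symm)) hxy
    · rcases hz' with hz1 | hz1 | hz1
      · exact isSquare_det_of_cycle A hxy hxz hyz hx1 hy1 hz1
      · exact absurd (hinj (hx1.trans hz1.symm)) hxz
      · exact absurd (hinj (hy1.trans hz1.symm)) hyz
  · rcases hy' with hy1 | hy1 | hy1
    · rcases hz' with hz1 | hz1 | hz1
      · exact absurd (hinj (hz1.trans hy1.symm)) (Ne.symm hyz)
      · exact isSquare_det_of_cycle A hxz hxy hyz.symm hx1 hz1 hy1
      · exact absurd (hinj (hx1.trans hz1.symm)) hxz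
    · rcases hz' with hz1 | hz1 | hz1
      · exact isSquare_det_of_swap A hsq hxy.symm hyz hxz hy1 hx1 hz1
      · exact absurd (hinj (hz1.trans hy1.symm)) (Ne.symm hyz)
      · exact absurd (hinj (hx1.trans hz1.symm)) hxz
    · exact absurd (hinj (hx1.trans hy1.symm)) hxy
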